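/- Every pairwise compatible split system on a finite set X = {1,…,n} is circular: there exists a bijection x : {1,…,n} → X (a circular ordering of X) such that every split in the system has one block of the form {x_{i+1}, x_{i+2}, …, x_j} for some i < j. -/

import Mathlib

/-- A split `S = {A,B}` of `X = {1,…,n}` (modeled as `Fin n`): a partition of
`X` into two nonempty blocks. -/
structure Split (n : ℕ) where
  A : Finset (Fin n)
  B : Finset (Fin n)
  hA : A.Nonempty
  hB : B.Nonempty
  hdisj : Disjoint A B
  hcover : A ∪ B = Finset.univ

/-- A split system is pairwise compatible if for every pair of distinct splits
`{A,B}` and `{A',B'}`, at least one of `A∩A'`, `A∩B'`, `B∩A'`, `B∩B'` is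
empty. -/
def PairwiseCompatible {n : ℕ} (𝒮 : Set (Split n)) : Prop :=
  ∀ S₁ ∈ 𝒮, ∀ S₂ ∈ 𝒮, S₁ ≠ S₂ →
    S₁.A ∩ S₂.A = ∅ ∨ S₁.A ∩ S₂.B = ∅ ∨ S₁.B ∩ S₂.A = ∅ ∨ S₁.B ∩ S₂.B = ∅

/-- Key compatibility consequence: two blocks avoiding a common point `p` are
nested or disjoint. -/
lemma key_nested {n : ℕ} (A B A' B' : Finset (Fin n))
    (hc : A ∪ B = Finset.univ) (hc' : A' ∪ B' = Finset.univ) (p : Fin n)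
    (hp : p ∈ B) (hp' : p ∈ B')
    (h : A ∩ A' = ∅ ∨ A ∩ B' = ∅ ∨ B ∩ A' = ∅ ∨ B ∩ B' = ∅) :
    A ⊆ A' ∨ A' ⊆ A ∨ A ∩ A' = ∅ := by
  rcases h with h | h | h | h
  · exact Or.inr (Or.inr h)
  · left
    intro x hx
    have hx' : x ∉ B' := by
      intro hxB
      have : x ∈ A ∩ B' := Finset.mem_inter.mpr ⟨hx, hxB⟩
      simp [h] at this
    have : x ∈ A' ∪ B' := by rw [hc']; exact Finset.mem_univ x
    rcases Finset.mem_union.mp this with h' | h'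
    · exact h'
    · exact absurd h' hx'
  · right; left
    intro x hx
    have hx' : x ∉ B := by
      intro hxB
      have : x ∈ B ∩ A' := Finset.mem_inter.mpr ⟨hxB, hx⟩
      simp [h] at this
    have : x ∈ A ∪ B := by rw [hc]; exact Finset.mem_univ x
    rcases Finset.mem_union.mp this with h' | h'
    · exact h'
    · exact absurd h' hx'
  · exfalso
    have : p ∈ B ∩ B' := Finset.mem_inter.mpr ⟨hp, hp'⟩
    simp [h] at this

/-- A laminar family over `U` can be realized by an ordering of `U` in which
every member is a contiguous segment. -/
lemma laminar_ordering {n : ℕ} : ∀ (k : ℕ) (F : Finset (Finset (Fin n))),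
    F.card ≤ k → ∀ (U : Finset (Fin n)),
    (∀ C ∈ F, C ⊆ U) → (∀ C ∈ F, C.Nonempty) →
    (∀ C ∈ F, ∀ D ∈ F, C ⊆ D ∨ D ⊆ C ∨ C ∩ D = ∅) →
    ∃ l : List (Fin n), l.Nodup ∧ l.toFinset = U ∧
      ∀ C ∈ F, ∃ l₁ m l₂ : List (Fin n), l = l₁ ++ m ++ l₂ ∧ m.toFinset = C := by
  intro k
  induction k with
  | zero =>
    intro F hF U _ _ _
    have hFe : F = ∅ := Finset.card_eq_zero.mp (Nat.le_antisymm hF (Nat.zero_le _))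
    exact ⟨U.toList, U.nodup_toList, Finset.toList_toFinset U, by simp [hFe]⟩
  | succ k ih =>
    intro F hcard U hsub hne hlam
    rcases F.eq_empty_or_nonempty with rfl | hFne
    · exact ⟨U.toList, U.nodup_toList, Finset.toList_toFinset U, by simp⟩
    classical
    obtain ⟨M, hM, hmax⟩ : ∃ M ∈ F, ∀ C ∈ F, ¬ M ⊂ C := by
      obtain ⟨M, hM⟩ := Finset.exists_maximal hFne
      exact ⟨M, hM.1, fun C hC h => h.not_subset (hM.2 hC h.subset)⟩
    set Fi : Finset (Finset (Fin n)) := F.filter (fun C => C ⊆ M ∧ C ≠ M) with hFi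
    set Fo : Finset (Finset (Fin n)) := F.filter (fun C => C ∩ M = ∅) with hFo
    have hFiF : Fi ⊆ F.erase M := by
      intro C hC
      rw [hFi, Finset.mem_filter] at hC
      exact Finset.mem_erase.mpr ⟨hC.2.2, hC.1⟩
    have hFoF : Fo ⊆ F.erase M := by
      intro C hC
      rw [hFo, Finset.mem_filter] at hC
      refine Finset.mem_erase.mpr ⟨?_, hC.1⟩
      intro hCM
      obtain ⟨a, ha⟩ := hne C hC.1
      have : a ∈ C ∩ M := Finset.mem_inter.mpr ⟨ha, hCM ▸ ha⟩
      simp [hC.2] at this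
    have hcard' : (F.erase M).card ≤ k := by
      have := Finset.card_erase_of_mem hM
      omega
    have hFic : Fi.card ≤ k := le_trans (Finset.card_le_card hFiF) hcard'
    have hFoc : Fo.card ≤ k := le_trans (Finset.card_le_card hFoF) hcard'
    -- classification of members
    have hclass : ∀ C ∈ F, C = M ∨ C ∈ Fi ∨ C ∈ Fo := by
      intro C hC
      by_cases hCM : C = M
      · exact Or.inl hCM
      rcases hlam C hC M hM with h | h | h
      · exact Or.inr (Or.inl (Finset.mem_filter.mpr ⟨hC, h, hCM⟩))
      · exfalso
        exact hmax C hC (Finset.ssubset_iff_subset_ne.mpr ⟨h, Ne.symm hCM⟩)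
      · exact Or.inr (Or.inr (Finset.mem_filter.mpr ⟨hC, h⟩))
    obtain ⟨li, hlin, hlit, hliseg⟩ := ih Fi hFic M
      (fun C hC => (Finset.mem_filter.mp hC).2.1)
      (fun C hC => hne C (Finset.mem_filter.mp hC).1)
      (fun C hC D hD => hlam C (Finset.mem_filter.mp hC).1 D (Finset.mem_filter.mp hD).1)
    obtain ⟨lo, hlon, hlot, hloseg⟩ := ih Fo hFoc (U \ M)
      (fun C hC => by
        have h1 := hsub C (Finset.mem_filter.mp hC).1
        have h2 := (Finset.mem_filter.mp hC).2
        intro a ha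
        refine Finset.mem_sdiff.mpr ⟨h1 ha, fun haM => ?_⟩
        have : a ∈ C ∩ M := Finset.mem_inter.mpr ⟨ha, haM⟩
        simp [h2] at this)
      (fun C hC => hne C (Finset.mem_filter.mp hC).1)
      (fun C hC D hD => hlam C (Finset.mem_filter.mp hC).1 D (Finset.mem_filter.mp hD).1)
    refine ⟨li ++ lo, ?_, ?_, ?_⟩
    · rw [List.nodup_append]
      refine ⟨hlin, hlon, fun a ha b ha' hab => ?_⟩
      have h1 : a ∈ M := by rw [← hlit]; exact List.mem_toFinset.mpr ha
      have h2 : a ∈ U \ M := by rw [← hlot]; exact List.mem_toFinset.mpr (hab ▸ ha')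
      exact (Finset.mem_sdiff.mp h2).2 h1
    · rw [List.toFinset_append, hlit, hlot]
      exact Finset.union_sdiff_of_subset (hsub M hM)
    · intro C hC
      rcases hclass C hC with rfl | hCi | hCo
      · exact ⟨[], li, lo, by simp, hlit⟩
      · obtain ⟨l₁, m, l₂, heq, hm⟩ := hliseg C hCi
        exact ⟨l₁, m, l₂ ++ lo, by rw [heq]; simp, hm⟩
      · obtain ⟨l₁, m, l₂, heq, hm⟩ := hloseg C hCo
        exact ⟨li ++ l₁, m, l₂, by rw [heq]; simp, hm⟩

set_option maxHeartbeats 1000000 in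
/-- every pairwise compatible split system on `X = {1,…,n}` is
circular: there is a bijection (circular ordering) `x : {1,…,n} → X` such that
every split in the system has one block of the form `{x_{i+1},…,x_j}`
(the image under `x` of `Ioc i j`) for some `i < j`. -/
theorem pairwiseCompatible_isCircular {n : ℕ} (𝒮 : Set (Split n))
    (hcomp : PairwiseCompatible 𝒮) :
    ∃ x : Equiv.Perm (Fin n), ∀ S ∈ 𝒮, ∃ i j : Fin n, i < j ∧
      (S.A = (Finset.Ioc i j).image x ∨ S.B = (Finset.Ioc i j).image x) := by
  classical
  rcases Nat.eq_zero_or_pos n with rfl | hn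
  · exact ⟨Equiv.refl _, fun S _ => S.hA.choose.elim0⟩
  set p : Fin n := ⟨0, hn⟩ with hp
  set F : Finset (Finset (Fin n)) :=
    Finset.univ.filter (fun C => p ∉ C ∧ ∃ S ∈ 𝒮, C = S.A ∨ C = S.B) with hFdef
  have hmemF : ∀ C : Finset (Fin n), C ∈ F ↔ p ∉ C ∧ ∃ S ∈ 𝒮, C = S.A ∨ C = S.B := by
    intro C; rw [hFdef, Finset.mem_filter]; simp
  have hne : ∀ C ∈ F, C.Nonempty := by
    intro C hC
    obtain ⟨-, S, -, h | h⟩ := (hmemF C).mp hC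
    · exact h ▸ S.hA
    · exact h ▸ S.hB
  have hother : ∀ S : Split n, ∀ C, (C = S.A ∨ C = S.B) → p ∉ C →
      ∃ D, (C = S.A ∧ D = S.B ∨ C = S.B ∧ D = S.A) ∧ C ∪ D = Finset.univ ∧ p ∈ D := by
    intro S C hCblk hpC
    have hpuniv : p ∈ S.A ∪ S.B := by rw [S.hcover]; exact Finset.mem_univ p
    rcases hCblk with rfl | rfl
    · refine ⟨S.B, Or.inl ⟨rfl, rfl⟩, S.hcover, ?_⟩
      rcases Finset.mem_union.mp hpuniv with h | h
      · exact absurd h hpC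
      · exact h
    · refine ⟨S.A, Or.inr ⟨rfl, rfl⟩, by rw [Finset.union_comm]; exact S.hcover, ?_⟩
      rcases Finset.mem_union.mp hpuniv with h | h
      · exact h
      · exact absurd h hpC
  have hlam : ∀ C ∈ F, ∀ D ∈ F, C ⊆ D ∨ D ⊆ C ∨ C ∩ D = ∅ := by
    intro C hC D hD
    obtain ⟨hpC, S, hS, hCblk⟩ := (hmemF C).mp hC
    obtain ⟨hpD, T, hT, hDblk⟩ := (hmemF D).mp hD
    by_cases hST : S = T
    · subst hST
      have : C = D := by
        rcases hCblk with rfl | rfl <;> rcases hDblk with rfl | rfl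
        · rfl
        · exfalso
          have hpuniv : p ∈ S.A ∪ S.B := by rw [S.hcover]; exact Finset.mem_univ p
          rcases Finset.mem_union.mp hpuniv with h | h
          · exact hpC h
          · exact hpD h
        · exfalso
          have hpuniv : p ∈ S.A ∪ S.B := by rw [S.hcover]; exact Finset.mem_univ p
          rcases Finset.mem_union.mp hpuniv with h | h
          · exact hpD h
          · exact hpC h
        · rfl
      exact Or.inl (this ▸ subset_rfl)
    · obtain ⟨C', hC'blk, hC'cov, hpC'⟩ := hother S C hCblk hpC
      obtain ⟨D', hD'blk, hD'cov, hpD'⟩ := hother T D hDblk hpD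
      have h4 := hcomp S hS T hT hST
      refine key_nested C C' D D' hC'cov hD'cov p hpC' hpD' ?_
      rcases hC'blk with ⟨rfl, rfl⟩ | ⟨rfl, rfl⟩ <;>
        rcases hD'blk with ⟨rfl, rfl⟩ | ⟨rfl, rfl⟩ <;> tauto
  obtain ⟨l, hln, hlt, hlseg⟩ := laminar_ordering F.card F le_rfl (Finset.univ.erase p)
    (fun C hC => by
      intro a ha
      refine Finset.mem_erase.mpr ⟨fun h => ?_, Finset.mem_univ a⟩
      exact ((hmemF C).mp hC).1 (h ▸ ha))
    hne hlam
  -- build the permutation from the list p :: l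
  set L : List (Fin n) := p :: l with hL
  have hLn : L.Nodup := by
    rw [hL, List.nodup_cons]
    refine ⟨fun h => ?_, hln⟩
    have : p ∈ Finset.univ.erase p := by rw [← hlt]; exact List.mem_toFinset.mpr h
    simp at this
  have hllen : l.length = n - 1 := by
    have := List.toFinset_card_of_nodup hln
    rw [hlt] at this
    simp [Finset.card_erase_of_mem (Finset.mem_univ p)] at this
    omega
  have hLlen : L.length = n := by rw [hL]; simp [hllen]; omega
  have hinj : Function.Injective (fun k : Fin n => L.get (Fin.cast hLlen.symm k)) := by
    intro a b hab
    have := List.nodup_iff_injective_get.mp hLn hab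
    exact Fin.cast_injective _ this
  have hbij : Function.Bijective (fun k : Fin n => L.get (Fin.cast hLlen.symm k)) :=
    (Finite.injective_iff_bijective).mp hinj
  refine ⟨Equiv.ofBijective _ hbij, fun S hS => ?_⟩
  have hpuniv : p ∈ S.A ∪ S.B := by rw [S.hcover]; exact Finset.mem_univ p
  obtain ⟨C, hCblk, hpC⟩ : ∃ C, (C = S.A ∨ C = S.B) ∧ p ∉ C := by
    rcases Finset.mem_union.mp hpuniv with h | h
    · exact ⟨S.B, Or.inr rfl, fun hb => (Finset.disjoint_left.mp S.hdisj h) hb⟩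
    · exact ⟨S.A, Or.inl rfl, fun ha => (Finset.disjoint_left.mp S.hdisj ha) h⟩
  have hCF : C ∈ F := (hmemF C).mpr ⟨hpC, S, hS, hCblk⟩
  obtain ⟨l₁, m, l₂, heq, hm⟩ := hlseg C hCF
  have hCne : C.Nonempty := hne C hCF
  have hmne : m ≠ [] := by
    intro h
    rw [h] at hm
    simp at hm
    exact Finset.nonempty_iff_ne_empty.mp hCne hm.symm
  have hmpos : 0 < m.length := List.length_pos_iff.mpr hmne
  have hsum : l₁.length + m.length ≤ l.length := by
    rw [heq]; simp
  set a := l₁.length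
  set b := m.length
  have hab : a + b ≤ n - 1 := hllen ▸ hsum
  have hjlt : a + b < n := by omega
  refine ⟨⟨a, by omega⟩, ⟨a + b, hjlt⟩, Fin.mk_lt_mk.mpr (by omega), ?_⟩
  have hL' : L = ((p :: l₁) ++ m) ++ l₂ := by rw [hL, heq]; simp
  have hget : ∀ (v : ℕ) (hv1 : a < v) (hv2 : v ≤ a + b) (hvL : v < L.length),
      L[v] = m[v - 1 - a]'(by omega) := by
    intro v hv1 hv2 hvL
    have hvL' : v < (((p :: l₁) ++ m) ++ l₂).length := by rw [← hL']; exact hvL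
    have h1 : v < ((p :: l₁) ++ m).length := by simp; omega
    have h2 : (p :: l₁).length ≤ v := by simp; omega
    calc L[v] = (((p :: l₁) ++ m) ++ l₂)[v]'hvL' := List.getElem_of_eq hL' hvL
      _ = ((p :: l₁) ++ m)[v]'h1 := List.getElem_append_left h1
      _ = m[v - (p :: l₁).length]'(by simp; simp at h1; omega) := List.getElem_append_right h2
      _ = m[v - 1 - a]'(by simp at h1; omega) := by congr 1; simp; omega
  have hget2 : ∀ (w : Fin L.length) (r : ℕ) (hr : r < b), w.val = a + 1 + r →
      L.get w = m[r]'hr := by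
    intro w r hr hw
    rw [List.get_eq_getElem, hget w.val (by omega) (by omega) w.isLt]
    congr 1
    omega
  have hget1 : ∀ (w : Fin L.length), a < w.val → w.val ≤ a + b → L.get w ∈ m := by
    intro w h1 h2
    rw [List.get_eq_getElem, hget w.val h1 h2 w.isLt]
    exact List.getElem_mem _
  have hgoal : C = (Finset.Ioc (⟨a, by omega⟩ : Fin n) ⟨a + b, hjlt⟩).image
      (Equiv.ofBijective _ hbij) := by
    ext t
    simp only [Finset.mem_image, Finset.mem_Ioc]
    constructor
    · intro ht
      have htm : t ∈ m := by rw [← hm] at ht; exact List.mem_toFinset.mp ht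
      obtain ⟨r, hr, hrt⟩ := List.mem_iff_getElem.mp htm
      refine ⟨⟨a + 1 + r, by omega⟩, ⟨Fin.mk_lt_mk.mpr (by omega), Fin.mk_le_mk.mpr (by omega)⟩, ?_⟩
      show L.get (Fin.cast hLlen.symm ⟨a + 1 + r, by omega⟩) = t
      rw [hget2 _ r hr rfl]
      exact hrt
    · rintro ⟨k, ⟨hk1, hk2⟩, hkt⟩
      have hk1' : a < (Fin.cast hLlen.symm k).val := hk1
      have hk2' : (Fin.cast hLlen.symm k).val ≤ a + b := hk2
      have hkt' : L.get (Fin.cast hLlen.symm k) = t := hkt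
      have htm : t ∈ m := hkt' ▸ hget1 _ hk1' hk2'
      rw [← hm]
      exact List.mem_toFinset.mpr htm
  rcases hCblk with rfl | rfl
  · exact Or.inl hgoal
  · exact Or.inr hgoal
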